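/- Let A be an n × n matrix with nonnegative real entries and let Π(A) be the matrix whose (i,j) entry equals A_{ij} if there exists a permutation σ of {1,…,n} with σ(i) = j and ∏_{k} A_{k,σ(k)} > 0 (i.e., the entry lies on a positive diagonal), and equals 0 otherwise. Then: (i) Π(A) = 0 if and only if per(A) = 0; (ii) pm(Π(A)) = pm(A); (iii) sm(Π(A)) = sm(A). -/

import Mathlib

open scoped BigOperators Kronecker
open Matrix

/-- The permanent of a square real matrix. -/
noncomputable def perm {ι : Type*} [Fintype ι] [DecidableEq ι] (A : Matrix ι ι ℝ) : ℝ :=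
  ∑ σ : Equiv.Perm ι, ∏ i, A i (σ i)

/-- The permanental mean `pm A = (per A / n!) ^ (1/n)`. -/
noncomputable def pm {ι : Type*} [Fintype ι] [DecidableEq ι] (A : Matrix ι ι ℝ) : ℝ :=
  (perm A / (Nat.factorial (Fintype.card ι) : ℝ)) ^ ((Fintype.card ι : ℝ)⁻¹)

/-- The geometric mean of the entries of a vector. -/
noncomputable def gmVec {ι : Type*} [Fintype ι] (v : ι → ℝ) : ℝ :=
  (∏ i, v i) ^ ((Fintype.card ι : ℝ)⁻¹)

/-- The set of values whose infimum defines the scaling mean. -/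
noncomputable def smSet {ι κ : Type*} [Fintype ι] [Fintype κ] (A : Matrix ι κ ℝ) : Set ℝ :=
  {r : ℝ | ∃ x : ι → ℝ, ∃ y : κ → ℝ, (∀ i, 0 < x i) ∧ (∀ j, 0 < y j) ∧
    r = (∑ i, ∑ j, x i * A i j * y j) / (gmVec x * gmVec y)}

/-- The scaling mean `sm A = (1/(mn)) · inf over positive vectors x, y of xᵀAy/(gm x · gm y)`. -/
noncomputable def sm {ι κ : Type*} [Fintype ι] [Fintype κ] (A : Matrix ι κ ℝ) : ℝ :=
  ((Fintype.card ι : ℝ) * (Fintype.card κ : ℝ))⁻¹ * sInf (smSet A)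

/-- `PiMap A` keeps the entries of `A` lying on a positive diagonal and
sets all other entries to zero. -/
noncomputable def PiMap {ι : Type*} [Fintype ι] [DecidableEq ι]
    (A : Matrix ι ι ℝ) : Matrix ι ι ℝ :=
  Matrix.of fun i j =>
    haveI := Classical.propDecidable (∃ σ : Equiv.Perm ι, σ i = j ∧ 0 < ∏ k, A k (σ k))
    if ∃ σ : Equiv.Perm ι, σ i = j ∧ 0 < ∏ k, A k (σ k) then A i j else 0


namespace Stmt11Aux
open Finset


lemma factor_pos {ι : Type*} [Fintype ι] {f : ι → ℝ} (h0 : ∀ i, 0 ≤ f i)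
    (h : 0 < ∏ i, f i) (i : ι) : 0 < f i := by
  rcases (h0 i).lt_or_eq with h' | h'
  · exact h'
  · exfalso
    rw [Finset.prod_eq_zero (Finset.mem_univ i) h'.symm] at h
    exact lt_irrefl 0 h

section Digraph

variable {n : ℕ} (A : Matrix (Fin n) (Fin n) ℝ) (σ₀ : Equiv.Perm (Fin n))

def Edge (u v : Fin n) : Prop := 0 < A u (σ₀ v)

abbrev Rel : Fin n → Fin n → Prop := Relation.ReflTransGen (Edge A σ₀)

noncomputable def fpot (u : Fin n) : ℕ := {w | Rel A σ₀ w u}.ncard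

variable {A σ₀}

lemma fpot_le {u v : Fin n} (h : Rel A σ₀ u v) : fpot A σ₀ u ≤ fpot A σ₀ v :=
  Set.ncard_le_ncard (fun w hw => Relation.ReflTransGen.trans hw h) (Set.toFinite _)

lemma fpot_lt {u v : Fin n} (h : Edge A σ₀ u v) (h2 : ¬ Rel A σ₀ v u) :
    fpot A σ₀ u < fpot A σ₀ v := by
  apply Set.ncard_lt_ncard _ (Set.toFinite _)
  constructor
  · exact fun w hw => Relation.ReflTransGen.trans hw (Relation.ReflTransGen.single h)
  · intro hsub
    exact h2 (hsub (show Rel A σ₀ v v from Relation.ReflTransGen.refl))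

lemma rel_apply_self {τ : Equiv.Perm (Fin n)} (hτ : ∀ k, Edge A σ₀ k (τ k)) (u : Fin n) :
    Rel A σ₀ (τ u) u := by
  have key : ∀ s : ℕ, Rel A σ₀ (τ u) ((τ ^ s) (τ u)) := by
    intro s
    induction s with
    | zero => simpa using Relation.ReflTransGen.refl
    | succ s ih =>
        have h1 : (τ ^ (s + 1)) (τ u) = τ ((τ ^ s) (τ u)) := by
          rw [pow_succ' τ s]; rfl
        rw [h1]
        exact Relation.ReflTransGen.tail ih (hτ _)
    
  have hm : 0 < orderOf τ := orderOf_pos τ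
  have h2 : (τ ^ (orderOf τ - 1)) (τ u) = u := by
    have : (τ ^ (orderOf τ - 1)) (τ u) = ((τ ^ (orderOf τ - 1)) * τ) u := rfl
    rw [this, ← pow_succ, Nat.sub_add_cancel hm, pow_orderOf_eq_one]
    rfl
  have := key (orderOf τ - 1)
  rwa [h2] at this

lemma fpot_apply_eq {τ : Equiv.Perm (Fin n)} (hτ : ∀ k, Edge A σ₀ k (τ k)) (u : Fin n) :
    fpot A σ₀ (τ u) = fpot A σ₀ u :=
  le_antisymm (fpot_le (rel_apply_self hτ u))
    (fpot_le (Relation.ReflTransGen.single (hτ u)))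

lemma exists_exit {W : Set (Fin n)} {a b : Fin n} (hab : Rel A σ₀ a b)
    (ha : a ∈ W) (hb : b ∉ W) : ∃ p ∈ W, ∃ q, q ∉ W ∧ Edge A σ₀ p q := by
  induction hab using Relation.ReflTransGen.head_induction_on with
  | refl => exact absurd ha hb
  | head e _ ih =>
      rename_i c d _
      by_cases hd : d ∈ W
      · exact ih hd
      · exact ⟨c, ha, d, hd, e⟩

end Digraph


section Digraph
variable {n : ℕ} {A : Matrix (Fin n) (Fin n) ℝ} {σ₀ : Equiv.Perm (Fin n)}

lemma exists_perm_of_rel (h0 : ∀ k, Edge A σ₀ k k) {u v : Fin n}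
    (huv : Edge A σ₀ u v) (hrel : Rel A σ₀ v u) :
    ∃ τ : Equiv.Perm (Fin n), τ u = v ∧ ∀ k, Edge A σ₀ k (τ k) := by
  classical
  set t : Fin n → Finset (Fin n) :=
    fun k => if k = u then {v} else univ.filter (fun w => Edge A σ₀ k w) with ht
  have hmem_self : ∀ k, k ≠ u → k ∈ t k := by
    intro k hk
    simp only [ht, if_neg hk, mem_filter, mem_univ, true_and]
    exact h0 k
  have hall : ∀ s : Finset (Fin n), s.card ≤ (s.biUnion t).card := by
    intro s
    by_cases hu : u ∈ s
    · set s' := s.erase u with hs'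
      have hus' : u ∉ s' := Finset.notMem_erase u s
      have hsub' : ∀ k ∈ s', k ∈ s.biUnion t := by
        intro k hk
        exact Finset.mem_biUnion.mpr ⟨k, Finset.mem_of_mem_erase hk,
          hmem_self k (Finset.ne_of_mem_erase hk)⟩
      by_cases hv : v ∈ s'
      · obtain ⟨p, hp, q, hq, e⟩ := exists_exit hrel (show v ∈ (↑s' : Set (Fin n)) from hv)
          (show u ∉ (↑s' : Set (Fin n)) from hus')
        have hq' : q ∉ s' := hq
        have hsub : insert q s' ⊆ s.biUnion t := by
          intro k hk
          rcases Finset.mem_insert.mp hk with rfl | hk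
          · refine Finset.mem_biUnion.mpr ⟨p, Finset.mem_of_mem_erase hp, ?_⟩
            simp only [ht, if_neg (Finset.ne_of_mem_erase hp), mem_filter, mem_univ, true_and]
            exact e
          · exact hsub' k hk
        calc s.card = s'.card + 1 := (Finset.card_erase_add_one hu).symm
          _ = (insert q s').card := (Finset.card_insert_of_notMem hq').symm
          _ ≤ (s.biUnion t).card := Finset.card_le_card hsub
      · have hsub : insert v s' ⊆ s.biUnion t := by
          intro k hk
          rcases Finset.mem_insert.mp hk with rfl | hk
          · exact Finset.mem_biUnion.mpr ⟨u, hu, by simp [ht]⟩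
          · exact hsub' k hk
        calc s.card = s'.card + 1 := (Finset.card_erase_add_one hu).symm
          _ = (insert v s').card := (Finset.card_insert_of_notMem hv).symm
          _ ≤ (s.biUnion t).card := Finset.card_le_card hsub
    · apply Finset.card_le_card
      intro k hk
      exact Finset.mem_biUnion.mpr ⟨k, hk, hmem_self k (fun h => hu (h ▸ hk))⟩
  obtain ⟨f, hfinj, hft⟩ := (Finset.all_card_le_biUnion_card_iff_exists_injective t).mp hall
  refine ⟨Equiv.ofBijective f (Finite.injective_iff_bijective.mp hfinj), ?_, ?_⟩
  · have := hft u
    simp only [ht, if_pos rfl, Finset.mem_singleton] at this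
    exact this
  · intro k
    show Edge A σ₀ k (f k)
    by_cases hk : k = u
    · subst hk
      have := hft k
      simp only [ht, if_pos rfl, Finset.mem_singleton] at this
      rwa [this]
    · have := hft k
      simp only [ht, if_neg hk, mem_filter] at this
      exact this.2

end Digraph

section Digraph2
variable {n : ℕ} {A : Matrix (Fin n) (Fin n) ℝ} {σ₀ : Equiv.Perm (Fin n)}

lemma fpot_eq_of_good (hA : ∀ i j, 0 ≤ A i j) {i j : Fin n}
    (h : ∃ σ : Equiv.Perm (Fin n), σ i = j ∧ 0 < ∏ k, A k (σ k)) :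
    fpot A σ₀ i = fpot A σ₀ (σ₀.symm j) := by
  obtain ⟨σ, hσi, hσp⟩ := h
  set τ : Equiv.Perm (Fin n) := σ.trans σ₀.symm with hτdef
  have hτ : ∀ k, Edge A σ₀ k (τ k) := by
    intro k
    have h1 : σ₀ (τ k) = σ k := by simp [hτdef]
    show 0 < A k (σ₀ (τ k))
    rw [h1]
    exact factor_pos (fun k => hA k (σ k)) hσp k
  have h1 : τ i = σ₀.symm j := by simp [hτdef, hσi]
  rw [← h1]
  exact (fpot_apply_eq hτ i).symm

lemma fpot_lt_of_not_good (hA : ∀ i j, 0 ≤ A i j) (h0 : ∀ k, Edge A σ₀ k k)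
    {i j : Fin n} (hpos : 0 < A i j)
    (h : ¬ ∃ σ : Equiv.Perm (Fin n), σ i = j ∧ 0 < ∏ k, A k (σ k)) :
    fpot A σ₀ i < fpot A σ₀ (σ₀.symm j) := by
  have hedge : Edge A σ₀ i (σ₀.symm j) := by
    show 0 < A i (σ₀ (σ₀.symm j))
    rwa [Equiv.apply_symm_apply]
  refine fpot_lt hedge ?_
  intro hrel
  obtain ⟨τ, hτu, hτ⟩ := exists_perm_of_rel h0 hedge hrel
  apply h
  refine ⟨τ.trans σ₀, ?_, ?_⟩
  · simp [hτu]
  · exact Finset.prod_pos (fun k _ => hτ k)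

end Digraph2

section SmBasic
variable {ι κ : Type*} [Fintype ι] [Fintype κ]

lemma gmVec_pos {x : ι → ℝ} (hx : ∀ i, 0 < x i) : 0 < gmVec x :=
  Real.rpow_pos_of_pos (Finset.prod_pos fun i _ => hx i) _

lemma smSet_nonneg {A : Matrix ι κ ℝ} (hA : ∀ i j, 0 ≤ A i j)
    {r : ℝ} (hr : r ∈ smSet A) : 0 ≤ r := by
  obtain ⟨x, y, hx, hy, rfl⟩ := hr
  apply div_nonneg
  · refine Finset.sum_nonneg fun i _ => Finset.sum_nonneg fun j _ => ?_
    exact mul_nonneg (mul_nonneg (hx i).le (hA i j)) (hy j).le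
  · exact (mul_pos (gmVec_pos hx) (gmVec_pos hy)).le

lemma smSet_nonempty (A : Matrix ι κ ℝ) : (smSet A).Nonempty :=
  ⟨_, (fun _ => 1), (fun _ => 1), fun _ => one_pos, fun _ => one_pos, rfl⟩

lemma smSet_bddBelow {A : Matrix ι κ ℝ} (hA : ∀ i j, 0 ≤ A i j) :
    BddBelow (smSet A) :=
  ⟨0, fun _ hr => smSet_nonneg hA hr⟩

end SmBasic

section PiMapBasic
variable {ι : Type*} [Fintype ι] [DecidableEq ι] {A : Matrix ι ι ℝ}

lemma piMap_eq_of {i j : ι} (h : ∃ σ : Equiv.Perm ι, σ i = j ∧ 0 < ∏ k, A k (σ k)) :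
    PiMap A i j = A i j := by
  simp only [PiMap, Matrix.of_apply]
  rw [if_pos h]

lemma piMap_eq_zero_of {i j : ι} (h : ¬ ∃ σ : Equiv.Perm ι, σ i = j ∧ 0 < ∏ k, A k (σ k)) :
    PiMap A i j = 0 := by
  simp only [PiMap, Matrix.of_apply]
  rw [if_neg h]

lemma piMap_nonneg (hA : ∀ i j, 0 ≤ A i j) (i j : ι) : 0 ≤ PiMap A i j := by
  by_cases h : ∃ σ : Equiv.Perm ι, σ i = j ∧ 0 < ∏ k, A k (σ k)
  · rw [piMap_eq_of h]; exact hA i j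
  · rw [piMap_eq_zero_of h]

lemma piMap_le (hA : ∀ i j, 0 ≤ A i j) (i j : ι) : PiMap A i j ≤ A i j := by
  by_cases h : ∃ σ : Equiv.Perm ι, σ i = j ∧ 0 < ∏ k, A k (σ k)
  · rw [piMap_eq_of h]
  · rw [piMap_eq_zero_of h]; exact hA i j

end PiMapBasic

section HallZero
variable {n : ℕ}

lemma exists_small_of_no_diag (hn : 0 < n) {A : Matrix (Fin n) (Fin n) ℝ}
    (hA : ∀ i j, 0 ≤ A i j)
    (hper : ¬ ∃ σ : Equiv.Perm (Fin n), 0 < ∏ k, A k (σ k))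
    {ε : ℝ} (hε : 0 < ε) : ∃ r ∈ smSet A, r ≤ ε := by
  classical
  set N : Fin n → Finset (Fin n) := fun i => univ.filter (fun j => 0 < A i j) with hN
  have hns : ¬ ∀ s : Finset (Fin n), s.card ≤ (s.biUnion N).card := by
    intro hall
    obtain ⟨g, hginj, hg⟩ := (Finset.all_card_le_biUnion_card_iff_exists_injective N).mp hall
    refine hper ⟨Equiv.ofBijective g (Finite.injective_iff_bijective.mp hginj), ?_⟩
    refine Finset.prod_pos fun k _ => ?_
    have := hg k
    simp only [hN, mem_filter] at this
    exact this.2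
  push_neg at hns
  obtain ⟨s, hs⟩ := hns
  set C := ∑ i, ∑ j, A i j with hC
  have hC0 : 0 ≤ C :=
    Finset.sum_nonneg fun i _ => Finset.sum_nonneg fun j _ => hA i j
  set G : ℝ := 1 + C / ε with hG
  have hG1 : 1 ≤ G := le_add_of_nonneg_right (div_nonneg hC0 hε.le)
  have hG0 : 0 < G := lt_of_lt_of_le one_pos hG1
  set t0 := G ^ n with ht0
  have ht01 : 1 ≤ t0 := one_le_pow₀ hG1
  have ht0pos : 0 < t0 := lt_of_lt_of_le one_pos ht01
  set x : Fin n → ℝ := fun i => if i ∈ s then t0 else 1 with hxdef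
  set y : Fin n → ℝ := fun j => if j ∈ s.biUnion N then t0⁻¹ else 1 with hydef
  have hx : ∀ i, 0 < x i := fun i => by
    simp only [hxdef]; split
    · exact ht0pos
    · exact one_pos
  have hy : ∀ j, 0 < y j := fun j => by
    simp only [hydef]; split
    · exact inv_pos.mpr ht0pos
    · exact one_pos
  refine ⟨_, ⟨x, y, hx, hy, rfl⟩, ?_⟩
  have hnum : ∑ i, ∑ j, x i * A i j * y j ≤ C := by
    rw [hC]
    refine Finset.sum_le_sum fun i _ => Finset.sum_le_sum fun j _ => ?_
    by_cases hij : 0 < A i j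
    · by_cases hi : i ∈ s
      · have hj : j ∈ s.biUnion N := Finset.mem_biUnion.mpr ⟨i, hi, by
          simp only [hN, mem_filter]; exact ⟨mem_univ j, hij⟩⟩
        simp only [hxdef, hydef, if_pos hi, if_pos hj]
        rw [mul_comm t0 (A i j), mul_assoc, mul_inv_cancel₀ ht0pos.ne', mul_one]
      · have hyj : y j ≤ 1 := by
          simp only [hydef]; split
          · exact inv_le_one_of_one_le₀ ht01
          · exact le_refl 1
        simp only [hxdef, if_neg hi, one_mul]
        calc A i j * y j ≤ A i j * 1 := mul_le_mul_of_nonneg_left hyj (hA i j)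
          _ = A i j := mul_one _
    · have h0 : A i j = 0 := le_antisymm (not_lt.mp hij) (hA i j)
      simp [h0, hA i j]
  have hprodx : ∏ i, x i = t0 ^ s.card := by
    rw [hxdef]
    rw [Finset.prod_ite_mem univ s (fun _ => t0), Finset.univ_inter, Finset.prod_const]
  have hprody : ∏ j, y j = (t0 ^ (s.biUnion N).card)⁻¹ := by
    rw [hydef]
    rw [Finset.prod_ite_mem univ (s.biUnion N) (fun _ => t0⁻¹), Finset.univ_inter,
      Finset.prod_const, inv_pow]
  have hcard : (s.biUnion N).card + 1 ≤ s.card := hs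
  have hdenom : G ≤ gmVec x * gmVec y := by
    have h1 : (∏ i, x i) * (∏ j, y j) = t0 ^ (s.card - (s.biUnion N).card) := by
      rw [hprodx, hprody, ← pow_sub₀ _ ht0pos.ne' (le_of_lt hs)]
    have h2 : t0 ≤ (∏ i, x i) * (∏ j, y j) := by
      rw [h1]
      calc t0 = t0 ^ 1 := (pow_one t0).symm
        _ ≤ t0 ^ (s.card - (s.biUnion N).card) := by
            apply pow_le_pow_right₀ ht01
            omega
    have h3 : gmVec x * gmVec y = ((∏ i, x i) * (∏ j, y j)) ^ ((n : ℝ)⁻¹) := by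
      rw [gmVec, gmVec, ← Real.mul_rpow (Finset.prod_nonneg fun i _ => (hx i).le)
        (Finset.prod_nonneg fun j _ => (hy j).le)]
      simp [Fintype.card_fin]
    rw [h3]
    calc G = (G ^ n) ^ ((n : ℝ)⁻¹) := by
          rw [← Real.rpow_natCast G n, ← Real.rpow_mul hG0.le]
          rw [mul_inv_cancel₀ (by exact_mod_cast hn.ne' : (n : ℝ) ≠ 0), Real.rpow_one]
      _ ≤ ((∏ i, x i) * (∏ j, y j)) ^ ((n : ℝ)⁻¹) := by
          apply Real.rpow_le_rpow ht0pos.le (ht0 ▸ h2)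
          positivity
  have hdpos : 0 < gmVec x * gmVec y := mul_pos (gmVec_pos hx) (gmVec_pos hy)
  calc (∑ i, ∑ j, x i * A i j * y j) / (gmVec x * gmVec y)
      ≤ C / G := by
        apply div_le_div₀ hC0 hnum hG0 hdenom
    _ ≤ ε := by
        rw [div_le_iff₀ hG0, hG]
        have : ε * (1 + C / ε) = ε + C := by
          field_simp
        rw [this]
        linarith
end HallZero

section KeyLe
variable {n : ℕ}

lemma exists_le_of_diag {A : Matrix (Fin n) (Fin n) ℝ} (hA : ∀ i j, 0 ≤ A i j)
    {σ₀ : Equiv.Perm (Fin n)} (hσ₀ : 0 < ∏ k, A k (σ₀ k))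
    {x y : Fin n → ℝ} (hx : ∀ i, 0 < x i) (hy : ∀ j, 0 < y j) {ε : ℝ} (hε : 0 < ε) :
    ∃ r ∈ smSet A,
      r ≤ (∑ i, ∑ j, x i * PiMap A i j * y j) / (gmVec x * gmVec y) + ε := by
  have h0 : ∀ k, Edge A σ₀ k k := fun k => factor_pos (fun k => hA k (σ₀ k)) hσ₀ k
  set f := fpot A σ₀ with hf
  set D := gmVec x * gmVec y with hD
  have hDpos : 0 < D := mul_pos (gmVec_pos hx) (gmVec_pos hy)
  set C := ∑ i, ∑ j, x i * A i j * y j with hC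
  have hC0 : 0 ≤ C := Finset.sum_nonneg fun i _ => Finset.sum_nonneg fun j _ =>
    mul_nonneg (mul_nonneg (hx i).le (hA i j)) (hy j).le
  set t : ℝ := 1 + C / (D * ε) with htdef
  have ht1 : 1 ≤ t := le_add_of_nonneg_right (div_nonneg hC0 (mul_pos hDpos hε).le)
  have ht0 : 0 < t := lt_of_lt_of_le one_pos ht1
  set xt : Fin n → ℝ := fun i => x i * t ^ (f i) with hxt
  set yt : Fin n → ℝ := fun j => y j * (t ^ (f (σ₀.symm j)))⁻¹ with hyt
  have hxtpos : ∀ i, 0 < xt i := fun i => mul_pos (hx i) (pow_pos ht0 _)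
  have hytpos : ∀ j, 0 < yt j := fun j => mul_pos (hy j) (inv_pos.mpr (pow_pos ht0 _))
  refine ⟨_, ⟨xt, yt, hxtpos, hytpos, rfl⟩, ?_⟩
  have hden : gmVec xt * gmVec yt = D := by
    have hpx : ∏ i, xt i = (∏ i, x i) * t ^ (∑ i, f i) := by
      rw [hxt, Finset.prod_mul_distrib, Finset.prod_pow_eq_pow_sum]
    have hpy : ∏ j, yt j = (∏ j, y j) * (t ^ (∑ i, f i))⁻¹ := by
      rw [hyt, Finset.prod_mul_distrib, Finset.prod_inv_distrib,
        Finset.prod_pow_eq_pow_sum]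
      congr 3
      exact Equiv.sum_comp σ₀.symm f
    rw [hD, gmVec, gmVec, gmVec, gmVec,
      ← Real.mul_rpow (Finset.prod_nonneg fun i _ => (hxtpos i).le)
        (Finset.prod_nonneg fun j _ => (hytpos j).le),
      ← Real.mul_rpow (Finset.prod_nonneg fun i _ => (hx i).le)
        (Finset.prod_nonneg fun j _ => (hy j).le)]
    congr 1
    rw [hpx, hpy]
    have hne : t ^ (∑ i, f i) ≠ 0 := pow_ne_zero _ ht0.ne'
    field_simp
  have hterm : ∀ i j, xt i * A i j * yt j
      ≤ x i * PiMap A i j * y j + x i * A i j * y j / t := by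
    intro i j
    have hsplit : xt i * A i j * yt j
        = x i * A i j * y j * (t ^ f i * (t ^ f (σ₀.symm j))⁻¹) := by
      rw [hxt, hyt]; ring
    by_cases hg : ∃ σ : Equiv.Perm (Fin n), σ i = j ∧ 0 < ∏ k, A k (σ k)
    · have hfeq : f i = f (σ₀.symm j) := fpot_eq_of_good hA hg
      have heq : xt i * A i j * yt j = x i * A i j * y j := by
        rw [hsplit, ← hfeq, mul_inv_cancel₀ (pow_ne_zero _ ht0.ne'), mul_one]
      rw [heq, piMap_eq_of hg]
      have : 0 ≤ x i * A i j * y j / t := div_nonneg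
        (mul_nonneg (mul_nonneg (hx i).le (hA i j)) (hy j).le) ht0.le
      linarith
    · rw [piMap_eq_zero_of hg, mul_zero, zero_mul, zero_add]
      by_cases hpos : 0 < A i j
      · have hlt : f i < f (σ₀.symm j) := fpot_lt_of_not_good hA h0 hpos hg
        have hfac : t ^ f i * (t ^ f (σ₀.symm j))⁻¹ ≤ t⁻¹ := by
          have h1 : t ^ (f i + 1) ≤ t ^ (f (σ₀.symm j)) := pow_le_pow_right₀ ht1 hlt
          calc t ^ f i * (t ^ f (σ₀.symm j))⁻¹
              ≤ t ^ f i * (t ^ (f i + 1))⁻¹ := by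
                apply mul_le_mul_of_nonneg_left _ (pow_nonneg ht0.le _)
                exact inv_anti₀ (pow_pos ht0 _) h1
            _ = t⁻¹ := by
                rw [pow_succ, mul_inv, ← mul_assoc,
                  mul_inv_cancel₀ (pow_ne_zero _ ht0.ne'), one_mul]
        rw [hsplit, div_eq_mul_inv]
        exact mul_le_mul_of_nonneg_left hfac
          (mul_nonneg (mul_nonneg (hx i).le (hA i j)) (hy j).le)
      · have h00 : A i j = 0 := le_antisymm (not_lt.mp hpos) (hA i j)
        simp [h00]
  have hnum : ∑ i, ∑ j, xt i * A i j * yt j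
      ≤ (∑ i, ∑ j, x i * PiMap A i j * y j) + C / t := by
    calc ∑ i, ∑ j, xt i * A i j * yt j
        ≤ ∑ i, ∑ j, (x i * PiMap A i j * y j + x i * A i j * y j / t) :=
          Finset.sum_le_sum fun i _ => Finset.sum_le_sum fun j _ => hterm i j
      _ = (∑ i, ∑ j, x i * PiMap A i j * y j) + C / t := by
          rw [hC, Finset.sum_div, ← Finset.sum_add_distrib]
          refine Finset.sum_congr rfl fun i _ => ?_
          rw [Finset.sum_div, ← Finset.sum_add_distrib]
  have hnum0 : 0 ≤ ∑ i, ∑ j, x i * PiMap A i j * y j :=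
    Finset.sum_nonneg fun i _ => Finset.sum_nonneg fun j _ =>
      mul_nonneg (mul_nonneg (hx i).le (piMap_nonneg hA i j)) (hy j).le
  have hCt : C / t / D ≤ ε := by
    rw [div_div, div_le_iff₀ (mul_pos ht0 hDpos)]
    have hkey : ε * (t * D) = ε * D + C := by
      rw [htdef]
      field_simp
    have : 0 ≤ ε * D := (mul_pos hε hDpos).le
    linarith
  rw [hden]
  calc (∑ i, ∑ j, xt i * A i j * yt j) / D
      ≤ ((∑ i, ∑ j, x i * PiMap A i j * y j) + C / t) / D := by
        apply div_le_div_of_nonneg_right hnum hDpos.le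
    _ = (∑ i, ∑ j, x i * PiMap A i j * y j) / D + C / t / D := add_div _ _ _
    _ ≤ (∑ i, ∑ j, x i * PiMap A i j * y j) / D + ε := by linarith

end KeyLe

end Stmt11Aux

open Stmt11Aux Finset in
/-- Properties of the projection `Π`: (i) `Π(A) = 0` iff `per A = 0`;
(ii) `pm(Π(A)) = pm(A)`; (iii) `sm(Π(A)) = sm(A)`. -/
theorem stmt_11 {n : ℕ} (hn : 0 < n) (A : Matrix (Fin n) (Fin n) ℝ)
    (hA : ∀ i j, 0 ≤ A i j) :
    (PiMap A = 0 ↔ perm A = 0) ∧ pm (PiMap A) = pm A ∧ sm (PiMap A) = sm A := by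
  have hterm_nonneg : ∀ σ : Equiv.Perm (Fin n), 0 ≤ ∏ k, A k (σ k) :=
    fun σ => Finset.prod_nonneg fun k _ => hA k (σ k)
  have hP0 : ∀ i j, 0 ≤ PiMap A i j := piMap_nonneg hA
  have hiff1 : perm A = 0 ↔ ¬ ∃ σ : Equiv.Perm (Fin n), 0 < ∏ k, A k (σ k) := by
    rw [perm, Finset.sum_eq_zero_iff_of_nonneg (fun σ _ => hterm_nonneg σ)]
    constructor
    · rintro h ⟨σ, hσ⟩
      rw [h σ (Finset.mem_univ σ)] at hσ
      exact lt_irrefl 0 hσ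
    · intro h σ _
      exact le_antisymm (not_lt.mp fun hc => h ⟨σ, hc⟩) (hterm_nonneg σ)
  have hiff2 : PiMap A = 0 ↔ ¬ ∃ σ : Equiv.Perm (Fin n), 0 < ∏ k, A k (σ k) := by
    constructor
    · rintro h ⟨σ, hσ⟩
      have i : Fin n := ⟨0, hn⟩
      have h2 : PiMap A i (σ i) = A i (σ i) := piMap_eq_of ⟨σ, rfl, hσ⟩
      have h3 : 0 < A i (σ i) := factor_pos (fun k => hA k (σ k)) hσ i
      rw [h, Matrix.zero_apply] at h2
      rw [← h2] at h3
      exact lt_irrefl 0 h3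
    · intro h
      ext i j
      rw [Matrix.zero_apply]
      apply piMap_eq_zero_of
      rintro ⟨σ, _, hσp⟩
      exact h ⟨σ, hσp⟩
  have hpermP : perm (PiMap A) = perm A := by
    rw [perm, perm]
    refine Finset.sum_congr rfl fun σ _ => ?_
    by_cases hσ : 0 < ∏ k, A k (σ k)
    · exact Finset.prod_congr rfl fun k _ => piMap_eq_of ⟨σ, rfl, hσ⟩
    · have h1 : ∏ k, A k (σ k) = 0 := le_antisymm (not_lt.mp hσ) (hterm_nonneg σ)
      rw [h1]
      refine le_antisymm ?_ (Finset.prod_nonneg fun k _ => piMap_nonneg hA k (σ k))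
      calc ∏ k, PiMap A k (σ k) ≤ ∏ k, A k (σ k) :=
            Finset.prod_le_prod (fun k _ => piMap_nonneg hA k _) (fun k _ => piMap_le hA k _)
        _ = 0 := h1
  have hsinf : sInf (smSet (PiMap A)) = sInf (smSet A) := by
    apply le_antisymm
    · refine le_csInf (smSet_nonempty A) ?_
      rintro r ⟨x, y, hx, hy, rfl⟩
      refine (csInf_le (smSet_bddBelow hP0) ⟨x, y, hx, hy, rfl⟩).trans ?_
      apply div_le_div_of_nonneg_right ?_ (mul_pos (gmVec_pos hx) (gmVec_pos hy)).le
      exact Finset.sum_le_sum fun i _ => Finset.sum_le_sum fun j _ =>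
        mul_le_mul_of_nonneg_right
          (mul_le_mul_of_nonneg_left (piMap_le hA i j) (hx i).le) (hy j).le
    · by_cases hper : ∃ σ : Equiv.Perm (Fin n), 0 < ∏ k, A k (σ k)
      · obtain ⟨σ₀, hσ₀⟩ := hper
        refine le_csInf (smSet_nonempty (PiMap A)) ?_
        rintro r ⟨x, y, hx, hy, rfl⟩
        refine le_of_forall_pos_le_add fun ε hε => ?_
        obtain ⟨r', hr'mem, hr'le⟩ := exists_le_of_diag hA hσ₀ hx hy hε
        exact (csInf_le (smSet_bddBelow hA) hr'mem).trans hr'le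
      · have h1 : sInf (smSet A) ≤ 0 := by
          refine le_of_forall_pos_le_add fun ε hε => ?_
          obtain ⟨r, hrmem, hrle⟩ := exists_small_of_no_diag hn hA hper hε
          rw [zero_add]
          exact (csInf_le (smSet_bddBelow hA) hrmem).trans hrle
        have h2 : 0 ≤ sInf (smSet (PiMap A)) :=
          le_csInf (smSet_nonempty _) fun r hr => smSet_nonneg hP0 hr
        exact h1.trans h2
  refine ⟨hiff2.trans hiff1.symm, ?_, ?_⟩
  · rw [pm, pm, hpermP]
  · rw [sm, sm, hsinf]
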